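/- arXiv:alg-geom/9610005 — 2 statements merged into one kernel-verified Lean document; each statement's English description precedes it below -/
import Mathlib

section
/- Let ζ : 𝒬₀ → ℝ and let f ∈ F_ζ be such that S = supp(f) has rank 0. Then there exists g ∈ F_ζ with π(g) = π(f) whose support T = supp(g) is a tree (contains no cycles) and satisfies T̄ = S̄; in particular, every rank-0 admissible configuration contains a tree with the same closure. -/
/-!
Common framework: finite quivers, flows, boundaries, cycles, closures, the projection π,
and the solution polyhedra of the (generalised) transportation problem, following
Sardo Infirri, "Orbifold Singularities and McKay Flows".
-/

open Finset

/-- A (finite) quiver given by tail and head maps on a type of arrows. -/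
structure FQuiver (V A : Type) where
  t : A → V
  h : A → V

namespace FQuiver

variable {V A : Type}

/-- The boundary (net contribution) of a flow `f : A → R` at each vertex. -/
def boundary [Fintype A] [DecidableEq V] (Q : FQuiver V A) {R : Type} [AddCommGroup R]
    (f : A → R) : V → R := fun v =>
  (∑ a ∈ univ.filter (fun a => Q.h a = v), f a) -
  (∑ a ∈ univ.filter (fun a => Q.t a = v), f a)

/-- Source of a step (an arrow together with a direction of traversal). -/
def stepSrc (Q : FQuiver V A) (s : A × Bool) : V := if s.2 then Q.t s.1 else Q.h s.1

/-- Destination of a step. -/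
def stepDst (Q : FQuiver V A) (s : A × Bool) : V := if s.2 then Q.h s.1 else Q.t s.1

/-- A walk (path) from `v` to `v'` in the underlying undirected graph of the quiver:
a nonempty list of steps which compose, with consecutive arrows distinct. -/
def IsWalk (Q : FQuiver V A) (p : List (A × Bool)) (v v' : V) : Prop :=
  p ≠ [] ∧
  p.head?.map Q.stepSrc = some v ∧
  p.getLast?.map Q.stepDst = some v' ∧
  List.Chain' (fun s s' => Q.stepDst s = Q.stepSrc s') p ∧
  List.Chain' (fun s s' : A × Bool => s.1 ≠ s'.1) p

/-- A cycle: a closed walk. -/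
def IsCycle (Q : FQuiver V A) (p : List (A × Bool)) : Prop := ∃ v, Q.IsWalk p v v

end FQuiver

variable {V A : Type}

/-- The positive part of a walk/cycle: the arrows traversed in agreement with it. -/
def posArrows (p : List (A × Bool)) : Set A := {a | (a, true) ∈ p}

/-- The negative part of a walk/cycle: the arrows traversed against it. -/
def negArrows (p : List (A × Bool)) : Set A := {a | (a, false) ∈ p}

/-- The (integral) basic flow associated to a walk/cycle. -/
def basicFlowZ [DecidableEq A] (p : List (A × Bool)) : A → ℤ := fun a =>
  (p.count (a, true) : ℤ) - (p.count (a, false) : ℤ)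

/-- The basic flow associated to a walk/cycle, as a real flow. -/
def basicFlow [DecidableEq A] (p : List (A × Bool)) : A → ℝ := fun a =>
  (basicFlowZ p a : ℝ)

/-- The linear map induced by a typing map `π : A → Fin n` on flows. -/
def piMap [Fintype A] {n : ℕ} (π : A → Fin n) {R : Type} [AddCommMonoid R] (f : A → R) :
    Fin n → R := fun i => ∑ a ∈ univ.filter (fun a => π a = i), f a

/-- The support of a flow. -/
def fsupport (f : A → ℝ) : Set A := {a | f a ≠ 0}

/-- The polyhedron `F_ζ` of admissible (nonnegative) `ζ`-flows. -/
def Fpoly [Fintype A] [DecidableEq V] (Q : FQuiver V A) (ζ : V → ℝ) : Set (A → ℝ) :=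
  {f | (∀ a, 0 ≤ f a) ∧ Q.boundary f = ζ}

/-- A set of arrows contains a cycle. -/
def ContainsCycle (Q : FQuiver V A) (S : Set A) : Prop :=
  ∃ p : List (A × Bool), Q.IsCycle p ∧ ∀ s ∈ p, s.1 ∈ S

/-- A set of arrows is closed if, for every cycle of type zero, it contains the positive
part iff it contains the negative part. -/
def IsClosedConfig [Fintype A] [DecidableEq A] {n : ℕ} (Q : FQuiver V A) (π : A → Fin n)
    (T : Set A) : Prop :=
  ∀ p : List (A × Bool), Q.IsCycle p → piMap π (basicFlowZ p) = 0 →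
    (posArrows p ⊆ T ↔ negArrows p ⊆ T)

/-- The closure `S̄` of a configuration: the smallest closed over-set. -/
def confClosure [Fintype A] [DecidableEq A] {n : ℕ} (Q : FQuiver V A) (π : A → Fin n)
    (S : Set A) : Set A :=
  ⋂₀ {T | S ⊆ T ∧ IsClosedConfig Q π T}

/-- `Z₀(S)`: the space of flows with zero boundary vanishing outside `S`. -/
def Z0 [Fintype A] [DecidableEq V] (Q : FQuiver V A) (S : Set A) : Set (A → ℝ) :=
  {g | Q.boundary g = 0 ∧ ∀ a ∉ S, g a = 0}

/-- `F₀(S)`: the cone of flows with zero boundary which are nonnegative outside `S`. -/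
def F0cone [Fintype A] [DecidableEq V] (Q : FQuiver V A) (S : Set A) : Set (A → ℝ) :=
  {g | Q.boundary g = 0 ∧ ∀ a ∉ S, 0 ≤ g a}

/-- The rank of a configuration: the dimension of `span(π(Z₀(S̄)))`. -/
noncomputable def confRank [Fintype A] [DecidableEq A] [DecidableEq V] {n : ℕ} (Q : FQuiver V A)
    (π : A → Fin n) (S : Set A) : ℕ :=
  Module.finrank ℝ
    (Submodule.span ℝ ((fun g : A → ℝ => piMap π g) '' Z0 Q (confClosure Q π S)))

/-- The projected polyhedron `π(F_ζ) ⊆ ℝⁿ`. -/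
def piImg [Fintype A] [DecidableEq V] {n : ℕ} (Q : FQuiver V A) (π : A → Fin n) (ζ : V → ℝ) :
    Set (Fin n → ℝ) := (fun g : A → ℝ => piMap π g) '' Fpoly Q ζ

/-- The tangent cone `ℝ₊(P − x)` of a convex set at a point. -/
def polyTangentCone {E : Type} [AddCommGroup E] [Module ℝ E] (P : Set E) (x : E) : Set E :=
  {y | ∃ t : ℝ, 0 ≤ t ∧ ∃ p ∈ P, y = t • (p - x)}

/-- A face of a convex set: a convex extreme subset. -/
def IsFace {E : Type} [AddCommGroup E] [Module ℝ E] (P F : Set E) : Prop :=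
  Convex ℝ F ∧ IsExtreme ℝ P F

/-- `Face_ζ(S)` computed from a flow `f`: `π(F_ζ) ∩ (π(f) + span(π(Z₀(S̄))))`. -/
def faceOf [Fintype A] [DecidableEq A] [DecidableEq V] {n : ℕ} (Q : FQuiver V A)
    (π : A → Fin n) (ζ : V → ℝ) (S : Set A) (f : A → ℝ) : Set (Fin n → ℝ) :=
  piImg Q π ζ ∩
    {y | y - piMap π f ∈
      Submodule.span ℝ ((fun g : A → ℝ => piMap π g) '' Z0 Q (confClosure Q π S))}

/-- The McKay quiver of the cyclic action `1/r (w₁, …, w_n)`: vertices `ℤ/rℤ` and one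
arrow `a_v^i : v → v − w_i` for each vertex `v` and each `i`. -/
def mckayQuiver (r n : ℕ) (w : Fin n → ZMod r) : FQuiver (ZMod r) (ZMod r × Fin n) where
  t := fun a => a.1
  h := fun a => a.1 - w a.2

/-- The commutation flow `χ_v^i + χ_{v−w_i}^j − χ_v^j − χ_{v−w_j}^i`. -/
def commFlow (r n : ℕ) (w : Fin n → ZMod r) (v : ZMod r) (i j : Fin n) :
    ZMod r × Fin n → ℤ := fun a =>
  (if a = (v, i) then 1 else 0) + (if a = (v - w i, j) then 1 else 0)
    - (if a = (v, j) then 1 else 0) - (if a = (v - w j, i) then 1 else 0)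

/-- `Λ²`: the subgroup of integral flows generated by the commutation flows. -/
def mckayLambda2 (r n : ℕ) (w : Fin n → ZMod r) : AddSubgroup (ZMod r × Fin n → ℤ) :=
  AddSubgroup.closure {g | ∃ v i j, g = commFlow r n w v i j}


set_option linter.unusedSectionVars false

section AuxProof
variable {V A : Type}

section Aux
variable [Fintype A] [DecidableEq V] [DecidableEq A] (Q : FQuiver V A)

lemma boundary_sub_smul (g χ : A → ℝ) (t : ℝ) :
    Q.boundary (fun a => g a - t * χ a) = fun v => Q.boundary g v - t * Q.boundary χ v := by
  funext v
  simp only [FQuiver.boundary, Finset.sum_sub_distrib, ← Finset.mul_sum]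
  ring

set_option linter.unusedSectionVars false in
lemma piMap_sub_smul {n : ℕ} (π : A → Fin n) (g χ : A → ℝ) (t : ℝ) :
    piMap π (fun a => g a - t * χ a) = fun i => piMap π g i - t * piMap π χ i := by
  funext i
  simp [piMap, Finset.sum_sub_distrib, Finset.mul_sum]

/-- the "step flow" of a single step -/
def stepFlow (s : A × Bool) : A → ℝ := fun a => if s.1 = a then (if s.2 then 1 else -1) else 0

set_option linter.unusedSectionVars false in
lemma basicFlow_cons (s : A × Bool) (p : List (A × Bool)) :
    basicFlow (s :: p) = fun a => stepFlow s a + basicFlow p a := by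
  funext a
  simp only [basicFlow, basicFlowZ, stepFlow, List.count_cons]
  rcases s with ⟨b, d⟩
  by_cases hb : b = a <;> rcases d with _ | _ <;>
    subst_eqs <;>
    simp_all [Prod.ext_iff, beq_iff_eq] <;> push_cast <;> ring

lemma boundary_stepFlow (s : A × Bool) :
    Q.boundary (stepFlow s) = fun v =>
      ((if Q.stepDst s = v then 1 else 0) - (if Q.stepSrc s = v then (1:ℝ) else 0)) := by
  funext v
  rcases s with ⟨a, d⟩
  simp only [FQuiver.boundary, stepFlow]
  rw [Finset.sum_filter, Finset.sum_filter]
  rw [Finset.sum_eq_single a (fun b _ hb => by simp [Ne.symm hb]) (fun hb => absurd (Finset.mem_univ a) hb),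
      Finset.sum_eq_single a (fun b _ hb => by simp [Ne.symm hb]) (fun hb => absurd (Finset.mem_univ a) hb)]
  rcases d with _ | _ <;>
    simp only [FQuiver.stepSrc, FQuiver.stepDst, if_true, if_false, Bool.false_eq_true] <;>
    by_cases h1 : Q.h a = v <;> by_cases h2 : Q.t a = v <;> simp [h1, h2]

set_option linter.unusedSectionVars false in
lemma boundary_add (g₁ g₂ : A → ℝ) :
    Q.boundary (fun a => g₁ a + g₂ a) = fun v => Q.boundary g₁ v + Q.boundary g₂ v := by
  funext v
  simp [FQuiver.boundary, Finset.sum_add_distrib]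
  ring

lemma walk_boundary : ∀ (p : List (A × Bool)) (v v' : V), p ≠ [] →
    p.head?.map Q.stepSrc = some v → p.getLast?.map Q.stepDst = some v' →
    List.Chain' (fun s s' => Q.stepDst s = Q.stepSrc s') p →
    Q.boundary (basicFlow p) = fun u =>
      (if v' = u then 1 else 0) - (if v = u then (1:ℝ) else 0)
  | [], _, _, h, _, _, _ => absurd rfl h
  | [s], v, v', _, hh, hl, _ => by
      simp only [List.head?, Option.map_some, Option.some.injEq] at hh
      simp only [List.getLast?, Option.map_some, Option.some.injEq] at hl
      subst hh; subst hl
      have : basicFlow [s] = fun a => stepFlow s a + basicFlow ([] : List (A × Bool)) a :=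
        basicFlow_cons s []
      have h1 : basicFlow [s] = stepFlow s := by
        rw [this]; funext a; simp [basicFlow, basicFlowZ]
      rw [h1, boundary_stepFlow Q s]
      simp
      funext u; congr
  | s :: s' :: p, v, v', _, hh, hl, hc => by
      simp only [List.head?, Option.map_some, Option.some.injEq] at hh
      subst hh
      have hl' : (s' :: p).getLast?.map Q.stepDst = some v' := by
        rwa [show (s :: s' :: p).getLast? = (s' :: p).getLast? from rfl] at hl
      have hc' := (List.isChain_cons_cons.mp hc)
      have ih := walk_boundary (s' :: p) (Q.stepSrc s') v' (by simp) (by simp) hl' hc'.2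
      rw [basicFlow_cons, boundary_add, boundary_stepFlow, ih]
      funext u
      simp only
      rw [hc'.1]
      by_cases h1 : Q.stepSrc s' = u <;> by_cases h2 : v' = u <;>
        by_cases h3 : Q.stepSrc s = u <;> simp [h1, h2, h3]

end Aux

section S2
variable {α : Type}

lemma option_or_some {o o' : Option α} {x : α} (h : o = some x) : o.or o' = some x := by
  subst h; rfl


lemma not_pairwise_decomp {R : α → α → Prop} :
    ∀ l : List α, ¬ l.Pairwise R →
      ∃ l₁ x l₂ y l₃, l = l₁ ++ x :: (l₂ ++ y :: l₃) ∧ ¬ R x y := by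
  intro l
  induction l with
  | nil => intro h; exact absurd List.Pairwise.nil h
  | cons x l ih =>
    intro h
    rw [List.pairwise_cons] at h
    by_cases h1 : ∀ y ∈ l, R x y
    · have h2 : ¬ l.Pairwise R := fun hp => h ⟨h1, hp⟩
      obtain ⟨l₁, x', l₂, y, l₃, hl, hr⟩ := ih h2
      exact ⟨x :: l₁, x', l₂, y, l₃, by rw [hl]; rfl, hr⟩
    · push_neg at h1
      obtain ⟨y, hy, hr⟩ := h1
      obtain ⟨l₂, l₃, hl⟩ := List.mem_iff_append.mp hy
      exact ⟨[], x, l₂, y, l₃, by rw [hl]; rfl, hr⟩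

end S2

section S3
variable {V A : Type}

lemma stepSrc_eq {Q : FQuiver V A} {s s' : A × Bool} (h1 : s.1 = s'.1) (h2 : s.2 = s'.2) :
    Q.stepSrc s = Q.stepSrc s' := by
  simp [FQuiver.stepSrc, h1, h2]

lemma stepDst_eq_stepSrc_rev {Q : FQuiver V A} {s s' : A × Bool} (h1 : s.1 = s'.1)
    (h2 : s.2 ≠ s'.2) : Q.stepDst s = Q.stepSrc s' := by
  have : s'.2 = !s.2 := by
    cases hb : s.2 <;> cases hb' : s'.2 <;> simp_all
  simp [FQuiver.stepDst, FQuiver.stepSrc, h1, this]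
  cases hb : s.2 <;> simp [hb, ← h1]

/-- From any cycle, extract a cycle whose arrows are pairwise distinct. -/
lemma cycle_shorten (Q : FQuiver V A) :
    ∀ (N : ℕ) (p : List (A × Bool)), p.length ≤ N → Q.IsCycle p →
      ∃ q, Q.IsCycle q ∧ (∀ s ∈ q, s ∈ p) ∧ (q.map Prod.fst).Nodup := by
  intro N
  induction N with
  | zero =>
    intro p hlen ⟨v, hne, _⟩
    exact absurd (List.length_eq_zero_iff.mp (Nat.le_zero.mp hlen)) hne
  | succ N ih =>
    intro p hlen hcyc
    by_cases hnd : (p.map Prod.fst).Nodup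
    · exact ⟨p, hcyc, fun s hs => hs, hnd⟩
    · obtain ⟨v, hne, hh, hl, hc, hd⟩ := hcyc
      have hnp : ¬ p.Pairwise (fun s s' : A × Bool => s.1 ≠ s'.1) := by
        rw [List.Nodup, List.pairwise_map] at hnd
        exact hnd
      obtain ⟨l₁, s₁, l₂, s₂, l₃, hp, hr⟩ := not_pairwise_decomp p hnp
      have h12 : s₁.1 = s₂.1 := not_not.mp hr
      -- the junction between (l₁ ++ s₁ :: l₂) and (s₂ :: l₃)
      have hp1 : p = (l₁ ++ s₁ :: l₂) ++ (s₂ :: l₃) := by rw [hp]; simp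
      have hcj : ∀ x ∈ (l₁ ++ s₁ :: l₂).getLast?,
          Q.stepDst x = Q.stepSrc s₂ := by
        have := (List.isChain_append.mp (hp1 ▸ hc)).2.2
        intro x hx
        exact this x hx s₂ rfl
      by_cases hss : s₁.2 = s₂.2
      · -- q = s₁ :: l₂
        set q : List (A × Bool) := s₁ :: l₂ with hq
        have hinf : q <:+: p := ⟨l₁, s₂ :: l₃, by simp [hp1, hq]⟩
        have hqlast : ∀ x ∈ q.getLast?, Q.stepDst x = Q.stepSrc s₁ := by
          intro x hx
          have : (l₁ ++ s₁ :: l₂).getLast? = q.getLast? := List.getLast?_append_cons l₁ s₁ l₂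
          have h2 := hcj x (by rw [this]; exact hx)
          rw [h2]; exact (stepSrc_eq h12 hss).symm
        obtain ⟨g, hg⟩ := Option.isSome_iff_exists.mp
          (List.getLast?_isSome.mpr (show q ≠ [] by simp [hq]))
        have hqcyc : Q.IsCycle q := by
          refine ⟨Q.stepSrc s₁, by simp [hq], by simp [hq], ?_, hc.infix hinf, hd.infix hinf⟩
          rw [hg]
          simp only [Option.map_some, Option.some.injEq]
          exact hqlast g hg
        have hqlen : q.length ≤ N := by
          have : p.length = l₁.length + (q.length + (l₃.length + 1)) := by
            rw [hp1]; simp [hq]; omega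
          omega
        obtain ⟨q', hq'c, hq'm, hq'nd⟩ := ih q hqlen hqcyc
        exact ⟨q', hq'c, fun s hs => hinf.subset (hq'm s hs), hq'nd⟩
      · -- arrows equal, directions opposite; q = l₂, nonempty
        have hl₂ : l₂ ≠ [] := by
          intro h0
          subst h0
          have hp2 : p = l₁ ++ (s₁ :: s₂ :: l₃) := by rw [hp]; rfl
          have := (List.isChain_append.mp (hp2 ▸ hd)).2.1
          rw [List.isChain_cons_cons] at this
          exact this.1 h12
        obtain ⟨e, l₂', he⟩ := List.exists_cons_of_ne_nil hl₂
        have hinf : l₂ <:+: p := ⟨l₁ ++ [s₁], s₂ :: l₃, by rw [hp1]; simp⟩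
        have hp2 : p = (l₁ ++ [s₁]) ++ (l₂ ++ s₂ :: l₃) := by rw [hp]; simp
        -- head of l₂
        have hhead : Q.stepSrc e = Q.stepDst s₁ := by
          have := (List.isChain_append.mp (hp2 ▸ hc)).2.2
          have h2 := this s₁ (by rw [List.getLast?_append_cons l₁ s₁ []]; rfl) e
            (by rw [he]; rfl)
          exact h2.symm
        -- last of l₂
        have hlast : ∀ x ∈ l₂.getLast?, Q.stepDst x = Q.stepSrc s₂ := by
          intro x hx
          refine hcj x ?_
          rw [List.getLast?_append_cons l₁ s₁ l₂]
          rw [show (s₁ :: l₂).getLast? = l₂.getLast?.or [s₁].getLast? from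
            List.getLast?_append (l := [s₁]) (l' := l₂)]
          exact option_or_some hx
        obtain ⟨g, hg⟩ := Option.isSome_iff_exists.mp (List.getLast?_isSome.mpr hl₂)
        have hconn : Q.stepDst s₁ = Q.stepSrc s₂ := stepDst_eq_stepSrc_rev h12 hss
        have hqcyc : Q.IsCycle l₂ := by
          refine ⟨Q.stepDst s₁, hl₂, ?_, ?_, hc.infix hinf, hd.infix hinf⟩
          · rw [he]; simp only [List.head?, Option.map_some, Option.some.injEq]
            exact hhead
          · rw [hg]; simp only [Option.map_some, Option.some.injEq]
            rw [hlast g hg]; exact hconn.symm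
        have hqlen : l₂.length ≤ N := by
          have : p.length = l₁.length + 1 + (l₂.length + (l₃.length + 1)) := by
            rw [hp1]; simp; omega
          omega
        obtain ⟨q', hq'c, hq'm, hq'nd⟩ := ih l₂ hqlen hqcyc
        exact ⟨q', hq'c, fun s hs => hinf.subset (hq'm s hs), hq'nd⟩

end S3

section S4
variable {V A : Type} [Fintype V] [Fintype A] [DecidableEq V] [DecidableEq A]

lemma subset_confClosure (Q : FQuiver V A) {n : ℕ} (π : A → Fin n) (S : Set A) :
    S ⊆ confClosure Q π S :=
  fun _ ha => Set.mem_sInter.mpr (fun _ hT => hT.1 ha)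

lemma isClosed_confClosure (Q : FQuiver V A) {n : ℕ} (π : A → Fin n) (S : Set A) :
    IsClosedConfig Q π (confClosure Q π S) := by
  intro p hp hz
  constructor
  · intro hpos a ha
    refine Set.mem_sInter.mpr fun T hT => ?_
    have h1 : posArrows p ⊆ T := fun b hb => Set.mem_sInter.mp (hpos hb) T hT
    exact ((hT.2 p hp hz).mp h1) ha
  · intro hneg a ha
    refine Set.mem_sInter.mpr fun T hT => ?_
    have h1 : negArrows p ⊆ T := fun b hb => Set.mem_sInter.mp (hneg hb) T hT
    exact ((hT.2 p hp hz).mpr h1) ha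

lemma confClosure_mono (Q : FQuiver V A) {n : ℕ} (π : A → Fin n) {S S' : Set A} (h : S ⊆ S') :
    confClosure Q π S ⊆ confClosure Q π S' := fun a ha =>
  Set.mem_sInter.mpr fun T hT => Set.mem_sInter.mp ha T ⟨h.trans hT.1, hT.2⟩

lemma confClosure_le (Q : FQuiver V A) {n : ℕ} (π : A → Fin n) {S T : Set A}
    (h1 : S ⊆ T) (h2 : IsClosedConfig Q π T) : confClosure Q π S ⊆ T :=
  Set.sInter_subset_of_mem ⟨h1, h2⟩

-- facts about basic flows of arrow-nodup cycles
lemma count_eq_one_of_mem' {α : Type*} [BEq α] [LawfulBEq α] {a : α} {l : List α}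
    (h : l.Nodup) (ha : a ∈ l) : l.count a = 1 := by
  induction l with
  | nil => simp at ha
  | cons x l ih =>
    rw [List.count_cons]
    rcases List.mem_cons.mp ha with rfl | ha'
    · have h0 : l.count a = 0 := List.count_eq_zero.mpr (List.nodup_cons.mp h).1
      simp [h0]
    · have hne : ¬ (x == a) = true := fun hbe => by
        have hxa : x = a := eq_of_beq hbe
        exact (List.nodup_cons.mp h).1 (hxa ▸ ha')
      simp [hne, ih (List.nodup_cons.mp h).2 ha']

lemma bf_of_mem {q : List (A × Bool)} (hnd : (q.map Prod.fst).Nodup) {a : A} {b : Bool}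
    (h : (a, b) ∈ q) : basicFlowZ q a = if b then 1 else -1 := by
  have hq : q.Nodup := List.Nodup.of_map _ hnd
  have h1 : q.count (a, b) = 1 := count_eq_one_of_mem' hq h
  have h2 : q.count (a, !b) = 0 := by
    rw [List.count_eq_zero]
    intro hmem
    have := List.inj_on_of_nodup_map hnd h hmem rfl
    simp at this
  cases b
  · simp only [basicFlowZ, Bool.not_false] at *
    rw [h1, h2]; rfl
  · simp only [basicFlowZ, Bool.not_true] at *
    rw [h1, h2]; rfl

lemma bf_of_not_mem {q : List (A × Bool)} {a : A}
    (h : ∀ b, (a, b) ∉ q) : basicFlowZ q a = 0 := by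
  simp only [basicFlowZ]
  rw [List.count_eq_zero.mpr (h true), List.count_eq_zero.mpr (h false)]
  rfl

lemma piMap_eq_zero_of_rank (Q : FQuiver V A) {n : ℕ} (π : A → Fin n) {S : Set A}
    (hrank : confRank Q π S = 0) (χ : A → ℝ) (hb : Q.boundary χ = 0)
    (hv : ∀ a ∉ confClosure Q π S, χ a = 0) : piMap π χ = 0 := by
  have hmem : piMap π χ ∈ Submodule.span ℝ
      ((fun g : A → ℝ => piMap π g) '' Z0 Q (confClosure Q π S)) :=
    Submodule.subset_span ⟨χ, ⟨hb, hv⟩, rfl⟩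
  rw [Submodule.finrank_eq_zero.mp hrank] at hmem
  exact (Submodule.mem_bot ℝ).mp hmem

lemma piMapZ_of_piMap {n : ℕ} (π : A → Fin n) {q : List (A × Bool)}
    (h : piMap π (basicFlow q) = 0) : piMap π (basicFlowZ q) = 0 := by
  funext i
  have h1 := congrFun h i
  simp only [piMap, basicFlow, Pi.zero_apply] at h1 ⊢
  exact_mod_cast h1

/-- The descent step: if the support of a rank-zero admissible flow contains a cycle,
there is another admissible flow with the same projection, strictly smaller support
and the same closure. -/
lemma descent_step (Q : FQuiver V A) {n : ℕ} (π : A → Fin n) (ζ : V → ℝ) (g : A → ℝ)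
    (hg : g ∈ Fpoly Q ζ) (hrank : confRank Q π (fsupport g) = 0)
    (hcyc : ContainsCycle Q (fsupport g)) :
    ∃ g', g' ∈ Fpoly Q ζ ∧ piMap π g' = piMap π g ∧ fsupport g' ⊆ fsupport g ∧
      confClosure Q π (fsupport g') = confClosure Q π (fsupport g) ∧
      (univ.filter fun a => g' a ≠ 0).card < (univ.filter fun a => g a ≠ 0).card := by
  obtain ⟨p, hpc, hps⟩ := hcyc
  obtain ⟨q, hqc, hqm, hnd⟩ := cycle_shorten Q p.length p le_rfl hpc
  have hqS : ∀ s ∈ q, s.1 ∈ fsupport g := fun s hs => hps s (hqm s hs)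
  obtain ⟨v, hne, hh, hl, hc, hd⟩ := hqc
  -- the basic flow of q has zero boundary
  have hbz : Q.boundary (basicFlow q) = 0 := by
    rw [walk_boundary Q q v v hne hh hl hc]
    funext u; simp
  -- arrows of q are in the support
  have hmem_of_ne : ∀ a, basicFlowZ q a ≠ 0 → a ∈ fsupport g := by
    intro a hbf
    by_cases hb : ∃ b, (a, b) ∈ q
    · obtain ⟨b, hb⟩ := hb; exact hqS (a, b) hb
    · push_neg at hb
      exact absurd (bf_of_not_mem hb) hbf
  -- rank zero: the type of q vanishes
  have hπ : piMap π (basicFlow q) = 0 := by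
    refine piMap_eq_zero_of_rank Q π hrank _ hbz fun a ha => ?_
    by_contra hne0
    have : basicFlowZ q a ≠ 0 := fun h0 => hne0 (by simp [basicFlow, h0])
    exact ha (subset_confClosure Q π _ (hmem_of_ne a this))
  have hπZ : piMap π (basicFlowZ q) = 0 := piMapZ_of_piMap π hπ
  -- choose the direction of descent
  obtain ⟨s₀, hs₀⟩ := List.exists_mem_of_ne_nil q hne
  set br : Bool := s₀.2 with hbr
  set D : Finset A := univ.filter (fun a => (a, br) ∈ q) with hD
  have hDne : D.Nonempty := ⟨s₀.1, by simp [hD, hbr]; exact hs₀⟩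
  obtain ⟨a₀, ha₀D, ha₀min⟩ := Finset.exists_min_image D g hDne
  have ha₀q : (a₀, br) ∈ q := by simpa [hD] using ha₀D
  set t : ℝ := g a₀ with htdef
  have ht : 0 < t := by
    have h1 : a₀ ∈ fsupport g := hqS (a₀, br) ha₀q
    have h2 : 0 ≤ g a₀ := hg.1 a₀
    rcases lt_or_eq_of_le h2 with h | h
    · exact h
    · exact absurd h.symm h1
  set ε : ℝ := if br then 1 else -1 with hε
  set g' : A → ℝ := fun a => g a - (ε * t) * basicFlow q a with hg'
  -- pointwise descriptions
  have e1 : ∀ a, (a, br) ∈ q → g' a = g a - t := by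
    intro a ha
    have := bf_of_mem hnd ha
    simp only [hg', basicFlow, this]
    cases hb : br <;> simp only [hε, hb, if_true, if_false, Bool.false_eq_true] <;>
      push_cast <;> ring
  have e2 : ∀ a, (a, !br) ∈ q → g' a = g a + t := by
    intro a ha
    have := bf_of_mem hnd ha
    simp only [hg', basicFlow, this]
    cases hb : br <;> simp only [hε, hb, if_true, if_false, Bool.not_true, Bool.not_false,
      Bool.false_eq_true] <;> push_cast <;> ring
  have e3 : ∀ a, (a, br) ∉ q → (a, !br) ∉ q → g' a = g a := by
    intro a h1 h2
    have h3 : ∀ b, (a, b) ∉ q := by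
      intro b
      rcases Bool.eq_or_eq_not b br with h | h
      · rw [h]; exact h1
      · rw [h]; exact h2
    simp [hg', basicFlow, bf_of_not_mem h3]
  -- membership in Fpoly
  have hg'F : g' ∈ Fpoly Q ζ := by
    constructor
    · intro a
      by_cases h1 : (a, br) ∈ q
      · rw [e1 a h1]
        have : t ≤ g a := ha₀min a (by simp [hD]; exact h1)
        linarith
      · by_cases h2 : (a, !br) ∈ q
        · rw [e2 a h2]
          have := hg.1 a
          linarith
        · rw [e3 a h1 h2]; exact hg.1 a
    · have := boundary_sub_smul Q g (basicFlow q) (ε * t)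
      rw [hg', this]
      funext u
      rw [show Q.boundary (basicFlow q) u = 0 from congrFun hbz u]
      rw [show Q.boundary g u = ζ u from congrFun hg.2 u]
      ring
  -- same projection
  have hg'π : piMap π g' = piMap π g := by
    rw [hg', piMap_sub_smul]
    funext i
    rw [show piMap π (basicFlow q) i = 0 from congrFun hπ i]
    ring
  -- support inclusion
  have hsupp : fsupport g' ⊆ fsupport g := by
    intro a ha
    by_cases h1 : (a, br) ∈ q
    · exact hqS (a, br) h1
    · by_cases h2 : (a, !br) ∈ q
      · exact hqS (a, !br) h2
      · intro h0
        exact ha (by rw [e3 a h1 h2]; exact h0)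
  -- surviving arrows: the reverse part of q keeps positive value
  have hsurv : ∀ a, (a, !br) ∈ q → a ∈ fsupport g' := by
    intro a ha h0
    have h1 := e2 a ha
    have h2 := hg.1 a
    rw [h0] at h1
    linarith
  -- a₀ is removed
  have ha₀rm : g' a₀ = 0 := by rw [e1 a₀ ha₀q, ← htdef]; ring
  -- closure equality
  have hICC := isClosed_confClosure Q π (fsupport g')
  have hqcyc : Q.IsCycle q := ⟨v, hne, hh, hl, hc, hd⟩
  have hbrpart : {a : A | (a, br) ∈ q} ⊆ confClosure Q π (fsupport g') := by
    have hrev : {a : A | (a, !br) ∈ q} ⊆ confClosure Q π (fsupport g') :=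
      fun a ha => subset_confClosure Q π _ (hsurv a ha)
    have hiff := hICC q hqcyc hπZ
    cases hb : br
    · exact hiff.mp (by simpa [posArrows, hb] using hrev)
    · exact hiff.mpr (by simpa [negArrows, hb] using hrev)
  have hsupp2 : fsupport g ⊆ confClosure Q π (fsupport g') := by
    intro a ha
    by_cases h0 : g' a = 0
    · by_cases h1 : (a, br) ∈ q
      · exact hbrpart h1
      · by_cases h2 : (a, !br) ∈ q
        · exact absurd h0 (hsurv a h2)
        · exact absurd (h0 ▸ (e3 a h1 h2)).symm ha
    · exact subset_confClosure Q π _ (show a ∈ fsupport g' from h0)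
  have hclos : confClosure Q π (fsupport g') = confClosure Q π (fsupport g) := by
    apply Set.Subset.antisymm
    · exact confClosure_mono Q π hsupp
    · exact confClosure_le Q π hsupp2 hICC
  -- cardinality decrease
  have hcard : (univ.filter fun a => g' a ≠ 0).card < (univ.filter fun a => g a ≠ 0).card := by
    apply Finset.card_lt_card
    constructor
    · intro a ha
      simp only [Finset.mem_filter, Finset.mem_univ, true_and] at ha ⊢
      exact hsupp ha
    · intro hsub
      have : a₀ ∈ univ.filter fun a => g a ≠ 0 := by
        simp only [Finset.mem_filter, Finset.mem_univ, true_and]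
        exact fun h => (by rw [← htdef] at h; exact ht.ne' h)
      have := hsub this
      simp only [Finset.mem_filter, Finset.mem_univ, true_and] at this
      exact this ha₀rm
  exact ⟨g', hg'F, hg'π, hsupp, hclos, hcard⟩

/-- Main induction: descend to a cycle-free support. -/
lemma main_aux (Q : FQuiver V A) {n : ℕ} (π : A → Fin n) (ζ : V → ℝ) :
    ∀ (N : ℕ) (g : A → ℝ), (univ.filter fun a => g a ≠ 0).card ≤ N →
    g ∈ Fpoly Q ζ → confRank Q π (fsupport g) = 0 →
    ∃ g₂, g₂ ∈ Fpoly Q ζ ∧ piMap π g₂ = piMap π g ∧ fsupport g₂ ⊆ fsupport g ∧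
      ¬ ContainsCycle Q (fsupport g₂) ∧
      confClosure Q π (fsupport g₂) = confClosure Q π (fsupport g) := by
  intro N
  induction N with
  | zero =>
    intro g hcard hg _
    refine ⟨g, hg, rfl, fun _ h => h, ?_, rfl⟩
    rintro ⟨p, ⟨v, hne, _⟩, hps⟩
    obtain ⟨s, hs⟩ := List.exists_mem_of_ne_nil p hne
    have h1 : s.1 ∈ fsupport g := hps s hs
    have h2 : s.1 ∈ univ.filter fun a => g a ≠ 0 := by
      simp only [Finset.mem_filter, Finset.mem_univ, true_and]; exact h1
    have := Finset.card_pos.mpr ⟨s.1, h2⟩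
    omega
  | succ N ih =>
    intro g hcard hg hrank
    by_cases hcyc : ContainsCycle Q (fsupport g)
    · obtain ⟨g', hg'F, hg'π, hsupp, hclos, hlt⟩ := descent_step Q π ζ g hg hrank hcyc
      have hrank' : confRank Q π (fsupport g') = 0 := by
        unfold confRank
        rw [hclos]
        exact hrank
      obtain ⟨g₂, h1, h2, h3, h4, h5⟩ := ih g' (by omega) hg'F hrank'
      exact ⟨g₂, h1, h2.trans hg'π, h3.trans hsupp, h4, h5.trans hclos⟩
    · exact ⟨g, hg, rfl, fun _ h => h, hcyc, rfl⟩

end S4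

/-- If `f ∈ F_ζ` and `S = supp(f)` has rank `0`, then there is
`g ∈ F_ζ` with `π(g) = π(f)` whose support is a tree `T ⊆ S` with `T̄ = S̄`. -/
theorem statement13 {V A : Type} [Fintype V] [Fintype A] [DecidableEq V] [DecidableEq A]
    (Q : FQuiver V A) {n : ℕ} (hn : 1 ≤ n) (π : A → Fin n) (ζ : V → ℝ)
    (f : A → ℝ) (hf : f ∈ Fpoly Q ζ) (hrank : confRank Q π (fsupport f) = 0) :
    ∃ g ∈ Fpoly Q ζ, piMap π g = piMap π f ∧ fsupport g ⊆ fsupport f ∧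
      ¬ ContainsCycle Q (fsupport g) ∧
      confClosure Q π (fsupport g) = confClosure Q π (fsupport f) := by
  obtain ⟨g, h1, h2, h3, h4, h5⟩ :=
    main_aux Q π ζ ((univ.filter fun a => f a ≠ 0).card) f le_rfl hf hrank
  exact ⟨g, h1, h2, h3, h4, h5⟩
end AuxProof
end

section
/- Let 𝒬 be the McKay quiver of the cyclic action 1/r(w₁,…,w_n), with each weight w_i a unit in ℤ/rℤ. Then the kernel of the group homomorphism π×∂ : Λ¹ → ℤⁿ × Λ^{0,0} equals Λ², the subgroup of Λ¹ generated by the commutation flows χ_v^i + χ_{v−w_i}^j − χ_v^j − χ_{v−w_j}^i for v ∈ ℤ/rℤ and i, j ∈ {1,…,n}. In particular the quotient Λ¹/Λ² is torsion-free. -/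
/-!
Common framework: finite quivers, flows, boundaries, cycles, closures, the projection π,
and the solution polyhedra of the (generalised) transportation problem, following
Sardo Infirri, "Orbifold Singularities and McKay Flows".
-/

open Finset

variable {V A : Type}

section McKayAux

open Finset

/-! Auxiliary lemmas for Statement 15. -/

lemma piMap_add' {A : Type} [Fintype A] {n : ℕ} (π : A → Fin n) (f g : A → ℤ) :
    piMap π (f + g) = piMap π f + piMap π g := by
  funext i; simp [piMap, Finset.sum_add_distrib]

lemma piMap_neg' {A : Type} [Fintype A] {n : ℕ} (π : A → Fin n) (f : A → ℤ) :
    piMap π (-f) = -piMap π f := by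
  funext i; simp [piMap, Finset.sum_neg_distrib]

lemma piMap_sub' {A : Type} [Fintype A] {n : ℕ} (π : A → Fin n) (f g : A → ℤ) :
    piMap π (f - g) = piMap π f - piMap π g := by
  funext i; simp [piMap, Finset.sum_sub_distrib]

lemma piMap_zero' {A : Type} [Fintype A] {n : ℕ} (π : A → Fin n) :
    piMap π (0 : A → ℤ) = 0 := by
  funext i; simp [piMap]

lemma boundary_add' {V A : Type} [Fintype A] [DecidableEq V] (Q : FQuiver V A)
    (f g : A → ℤ) : Q.boundary (f + g) = Q.boundary f + Q.boundary g := by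
  funext v; simp [FQuiver.boundary, Finset.sum_add_distrib]; ring

lemma boundary_neg' {V A : Type} [Fintype A] [DecidableEq V] (Q : FQuiver V A)
    (f : A → ℤ) : Q.boundary (-f) = -Q.boundary f := by
  funext v; simp [FQuiver.boundary, Finset.sum_neg_distrib]; ring

lemma boundary_sub' {V A : Type} [Fintype A] [DecidableEq V] (Q : FQuiver V A)
    (f g : A → ℤ) : Q.boundary (f - g) = Q.boundary f - Q.boundary g := by
  funext v; simp [FQuiver.boundary, Finset.sum_sub_distrib]; ring

lemma boundary_zero' {V A : Type} [Fintype A] [DecidableEq V] (Q : FQuiver V A) :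
    Q.boundary (0 : A → ℤ) = 0 := by
  funext v; simp [FQuiver.boundary]

lemma piMap_single' {A : Type} [Fintype A] [DecidableEq A] {n : ℕ} (π : A → Fin n) (c : A) :
    piMap π (fun a => if a = c then (1:ℤ) else 0) = fun i => if π c = i then 1 else 0 := by
  funext i
  simp [piMap, Finset.sum_ite_eq', Finset.mem_filter]

lemma boundary_single' {V A : Type} [Fintype A] [DecidableEq V] [DecidableEq A]
    (Q : FQuiver V A) (c : A) :
    Q.boundary (fun a => if a = c then (1:ℤ) else 0)
      = fun v => (if Q.h c = v then 1 else 0) - (if Q.t c = v then 1 else 0) := by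
  funext v
  simp [FQuiver.boundary, Finset.sum_ite_eq', Finset.mem_filter]

variable {r n : ℕ} [NeZero r]

lemma piMap_apply_eq (f : ZMod r × Fin n → ℤ) (i : Fin n) :
    piMap (Prod.snd : ZMod r × Fin n → Fin n) f i = ∑ v : ZMod r, f (v, i) := by
  classical
  rw [piMap, Finset.sum_filter, Fintype.sum_prod_type]
  simp

lemma boundary_mckay (w : Fin n → ZMod r) (f : ZMod r × Fin n → ℤ) (v : ZMod r) :
    (mckayQuiver r n w).boundary f v = (∑ i, f (v + w i, i)) - ∑ i, f (v, i) := by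
  classical
  rw [FQuiver.boundary]
  congr 1
  · rw [Finset.sum_filter, Fintype.sum_prod_type, Finset.sum_comm]
    simp only [mckayQuiver, sub_eq_iff_eq_add]
    simp
  · rw [Finset.sum_filter, Fintype.sum_prod_type, Finset.sum_comm]
    delta mckayQuiver
    simp [mckayQuiver]

lemma commFlow_eq (w : Fin n → ZMod r) (v : ZMod r) (i j : Fin n) :
    commFlow r n w v i j
      = ((fun a => if a = (v, i) then (1:ℤ) else 0)
          + (fun a => if a = (v - w i, j) then 1 else 0)
          - (fun a => if a = (v, j) then 1 else 0))
          - (fun a => if a = (v - w j, i) then 1 else 0) := rfl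

lemma commFlow_piMap (w : Fin n → ZMod r) (v : ZMod r) (i j : Fin n) :
    piMap Prod.snd (commFlow r n w v i j) = 0 := by
  rw [commFlow_eq, piMap_sub', piMap_sub', piMap_add', piMap_single', piMap_single',
    piMap_single', piMap_single']
  funext k
  simp only [Pi.sub_apply, Pi.add_apply, Pi.zero_apply]
  ring

lemma commFlow_boundary (w : Fin n → ZMod r) (v : ZMod r) (i j : Fin n) :
    (mckayQuiver r n w).boundary (commFlow r n w v i j) = 0 := by
  rw [commFlow_eq, boundary_sub', boundary_sub', boundary_add', boundary_single',
    boundary_single', boundary_single', boundary_single']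
  funext v'
  delta mckayQuiver
  dsimp only [mckayQuiver, Pi.sub_apply, Pi.add_apply, Pi.zero_apply]
  have h : v - w i - w j = v - w j - w i := sub_right_comm _ _ _
  simp only [h]
  ring

lemma sum_range_mul_unit (u z : ZMod r) (hz : z * u = 1) (F : ZMod r → ℤ) :
    ∑ l ∈ Finset.range r, F ((l : ZMod r) * u) = ∑ v : ZMod r, F v := by
  have huz : u * z = 1 := by rw [mul_comm]; exact hz
  refine Finset.sum_nbij' (i := fun l => (l : ZMod r) * u) (j := fun v => (v * z).val)
    (fun l _ => Finset.mem_univ _) (fun v _ => Finset.mem_range.2 (ZMod.val_lt _))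
    ?_ ?_ (fun l _ => rfl)
  · intro l hl
    rw [mul_assoc, huz, mul_one, ZMod.val_natCast,
      Nat.mod_eq_of_lt (Finset.mem_range.1 hl)]
  · intro v _
    rw [ZMod.natCast_val, ZMod.cast_id, mul_assoc, hz, mul_one]

lemma exists_primitive (u : ZMod r) (hu : IsUnit u) (F : ZMod r → ℤ)
    (hF : ∑ v : ZMod r, F v = 0) :
    ∃ H : ZMod r → ℤ, ∀ v, F v = H v - H (v + u) := by
  obtain ⟨z, hz⟩ := hu.exists_left_inv
  refine ⟨fun v => -∑ l ∈ Finset.range ((v * z).val), F ((l : ZMod r) * u), fun v => ?_⟩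
  dsimp only
  have hmlt : (v * z).val < r := ZMod.val_lt _
  have hvm : (((v * z).val : ℕ) : ZMod r) * u = v := by
    rw [ZMod.natCast_val, ZMod.cast_id, mul_assoc, hz, mul_one]
  have hsucc : ((v + u) * z).val = ((v * z).val + 1) % r := by
    have h1 : (v + u) * z = (((v * z).val + 1 : ℕ) : ZMod r) := by
      push_cast
      rw [add_mul, mul_comm u z, hz, ZMod.natCast_val, ZMod.cast_id]
    rw [h1, ZMod.val_natCast]
  rcases Nat.lt_or_ge ((v * z).val + 1) r with h | h
  · rw [hsucc, Nat.mod_eq_of_lt h, Finset.sum_range_succ, hvm]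
    ring
  · have heq : (v * z).val + 1 = r := by omega
    have h0 : ((v * z).val + 1) % r = 0 := by rw [heq, Nat.mod_self]
    rw [hsucc, h0]
    have key : ∑ l ∈ Finset.range r, F ((l : ZMod r) * u) = 0 := by
      rw [sum_range_mul_unit u z hz]; exact hF
    have key2 : ∑ l ∈ Finset.range ((v * z).val + 1), F ((l : ZMod r) * u) = 0 := by
      rw [heq]; exact key
    rw [Finset.sum_range_succ, hvm] at key2
    simp only [Finset.range_zero, Finset.sum_empty]
    linarith

lemma const_of_invariant (u : ZMod r) (hu : IsUnit u) (F : ZMod r → ℤ)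
    (hper : ∀ v, F (v + u) = F v) (hF : ∑ v : ZMod r, F v = 0) : ∀ v, F v = 0 := by
  obtain ⟨z, hz⟩ := hu.exists_left_inv
  have hmul : ∀ k : ℕ, F ((k : ZMod r) * u) = F 0 := by
    intro k
    induction k with
    | zero => simp
    | succ k ih =>
      have : (((k + 1 : ℕ)) : ZMod r) * u = (k : ZMod r) * u + u := by
        push_cast; ring
      rw [this, hper]; exact ih
  have hconst : ∀ v, F v = F 0 := by
    intro v
    have hvm : (((v * z).val : ℕ) : ZMod r) * u = v := by
      rw [ZMod.natCast_val, ZMod.cast_id, mul_assoc, hz, mul_one]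
    rw [← hvm, hmul]
  have hcard : ∑ v : ZMod r, F v = (r : ℤ) * F 0 := by
    rw [Finset.sum_congr rfl fun v _ => hconst v, Finset.sum_const, Finset.card_univ,
      ZMod.card, nsmul_eq_mul]
  rw [hF] at hcard
  have hr : (r : ℤ) ≠ 0 := Int.natCast_ne_zero.mpr (NeZero.ne r)
  have hF0 : F 0 = 0 := by
    rcases mul_eq_zero.1 hcard.symm with h | h
    · exact absurd h hr
    · exact h
  intro v; rw [hconst v, hF0]

end McKayAux

/-- In the McKay quiver of `1/r (w₁, …, w_n)` (weights units in
`ℤ/rℤ`), the kernel of `π×∂ : Λ¹ → ℤⁿ × Λ^{0,0}` is exactly `Λ²`, the subgroup generated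
by the commutation flows `χ_v^i + χ_{v−w_i}^j − χ_v^j − χ_{v−w_j}^i`; in particular the
quotient `Λ¹/Λ²` is torsion-free. -/
theorem statement15 (r n : ℕ) [NeZero r] (w : Fin n → ZMod r) (hw : ∀ i, IsUnit (w i)) :
    (∀ f : ZMod r × Fin n → ℤ,
      (piMap Prod.snd f = 0 ∧ (mckayQuiver r n w).boundary f = 0) ↔
        f ∈ mckayLambda2 r n w) ∧
    ∀ (k : ℤ) (f : ZMod r × Fin n → ℤ), k ≠ 0 → k • f ∈ mckayLambda2 r n w →
      f ∈ mckayLambda2 r n w := by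
    classical
  have hker : ∀ f : ZMod r × Fin n → ℤ, f ∈ mckayLambda2 r n w →
      piMap Prod.snd f = 0 ∧ (mckayQuiver r n w).boundary f = 0 := by
    intro f hf
    induction hf using AddSubgroup.closure_induction with
    | mem x hx =>
      obtain ⟨v, i, j, rfl⟩ := hx
      exact ⟨commFlow_piMap w v i j, commFlow_boundary w v i j⟩
    | zero => exact ⟨piMap_zero' _, boundary_zero' _⟩
    | add x y hx hy ihx ihy =>
      refine ⟨?_, ?_⟩
      · rw [piMap_add', ihx.1, ihy.1, add_zero]
      · rw [boundary_add', ihx.2, ihy.2, add_zero]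
    | neg x hx ihx =>
      refine ⟨?_, ?_⟩
      · rw [piMap_neg', ihx.1, neg_zero]
      · rw [boundary_neg', ihx.2, neg_zero]
  have fwd : ∀ f : ZMod r × Fin n → ℤ,
      piMap Prod.snd f = 0 → (mckayQuiver r n w).boundary f = 0 →
      f ∈ mckayLambda2 r n w := by
    intro f hπ hbd
    rcases Nat.eq_zero_or_pos n with h0 | hn
    · subst h0
      have : f = 0 := funext fun a => a.2.elim0
      rw [this]; exact zero_mem _
    set i0 : Fin n := ⟨0, hn⟩ with hi0
    have hsum : ∀ i : Fin n, ∑ v : ZMod r, f (v, i) = 0 := by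
      intro i
      have h := congrFun hπ i
      rwa [piMap_apply_eq] at h
    choose H hH using fun i : Fin n =>
      exists_primitive (w i0) (hw i0) (fun v => f (v, i)) (hsum i)
    set S : ZMod r × Fin n → ℤ :=
      ∑ i : Fin n, ∑ v : ZMod r, H i v • commFlow r n w v i i0 with hSdef
    have hgen : ∀ (v : ZMod r) (i j : Fin n), commFlow r n w v i j ∈ mckayLambda2 r n w := by
      intro v i j
      unfold mckayLambda2
      exact AddSubgroup.subset_closure ⟨v, i, j, rfl⟩
    have hS2 : S ∈ mckayLambda2 r n w := by
      exact sum_mem fun i _ => sum_mem fun v _ => zsmul_mem (hgen v i i0) _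
    have hSval : ∀ (u : ZMod r) (k : Fin n),
        S (u, k) = (H k u - H k (u + w i0)) +
          (if k = i0 then ∑ i : Fin n, (H i (u + w i) - H i u) else 0) := by
      intro u k
      rw [hSdef]
      simp only [Finset.sum_apply, Pi.smul_apply, smul_eq_mul, commFlow,
        Prod.mk.injEq, eq_sub_iff_add_eq, mul_add, mul_sub, mul_ite, mul_one, mul_zero,
        Finset.sum_add_distrib, Finset.sum_sub_distrib, ite_and, Finset.sum_ite_eq,
        Finset.mem_univ, if_true]
      by_cases hk : k = i0 <;> simp [hk, Finset.sum_sub_distrib] <;> ring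
    set g : ZMod r × Fin n → ℤ := f - S with hgdef
    obtain ⟨hSπ, hSbd⟩ := hker S hS2
    have hgπ : piMap Prod.snd g = 0 := by
      rw [hgdef, piMap_sub', hπ, hSπ, sub_zero]
    have hgbd : (mckayQuiver r n w).boundary g = 0 := by
      rw [hgdef, boundary_sub', hbd, hSbd, sub_zero]
    have hg1 : ∀ (u : ZMod r) (k : Fin n), k ≠ i0 → g (u, k) = 0 := by
      intro u k hk
      have hfk := hH k u
      rw [hgdef]
      simp only [Pi.sub_apply]
      rw [hSval u k, if_neg hk, hfk]
      ring
    have hper : ∀ v : ZMod r, g (v + w i0, i0) = g (v, i0) := by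
      intro v
      have hb := congrFun hgbd v
      rw [boundary_mckay] at hb
      simp only [Pi.zero_apply] at hb
      have h1 : ∑ i : Fin n, g (v + w i, i) = g (v + w i0, i0) :=
        Finset.sum_eq_single i0 (fun b _ hb' => hg1 _ b hb') (by simp)
      have h2 : ∑ i : Fin n, g (v, i) = g (v, i0) :=
        Finset.sum_eq_single i0 (fun b _ hb' => hg1 _ b hb') (by simp)
      rw [h1, h2] at hb
      linarith
    have hsum0 : ∑ v : ZMod r, g (v, i0) = 0 := by
      have h := congrFun hgπ i0
      rwa [piMap_apply_eq] at h
    have hzero := const_of_invariant (w i0) (hw i0) (fun v => g (v, i0)) hper hsum0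
    have hg : g = 0 := by
      funext a
      obtain ⟨u, k⟩ := a
      by_cases hk : k = i0
      · subst hk; exact hzero u
      · exact hg1 u k hk
    have hfS : f = S := by
      have := sub_eq_zero.mp hg
      exact this
    rw [hfS]; exact hS2
  refine ⟨fun f => ⟨fun h => fwd f h.1 h.2, hker f⟩, ?_⟩
  intro k f hk hkf
  obtain ⟨hπ, hbd⟩ := hker _ hkf
  apply fwd
  · funext i
    have h := congrFun hπ i
    rw [piMap_apply_eq] at h
    simp only [Pi.smul_apply, smul_eq_mul, ← Finset.mul_sum] at h
    have := mul_eq_zero.1 h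
    rcases this with h' | h'
    · exact absurd h' hk
    · rw [Pi.zero_apply]
      rw [piMap_apply_eq]
      exact h'
  · funext v
    have h := congrFun hbd v
    rw [boundary_mckay] at h
    simp only [Pi.zero_apply, Pi.smul_apply, smul_eq_mul, ← Finset.mul_sum, ← mul_sub] at h
    rcases mul_eq_zero.1 h with h' | h'
    · exact absurd h' hk
    · rw [Pi.zero_apply, boundary_mckay]
      exact h'
end
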